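/- Let X be a real random variable with E[X] = 0 and let K > 0 be such that exp(|X|/K) is integrable and E[exp(|X|/K)] ≤ 2. Then for every real h with |h|·K < 1, E[exp(hX)] ≤ 1 + 2K²h²/(1 − K|h|) ≤ exp(2K²h²/(1 − K|h|)). -/

import Mathlib

open MeasureTheory ProbabilityTheory Nat

/-- Key series bound: for `0 ≤ a ≤ 1` and `0 ≤ u`,
`exp (a*u) - 1 - a*u ≤ a^2 * exp u`. -/
lemma exp_mul_sub_le_aux {a u : ℝ} (ha0 : 0 ≤ a) (ha1 : a ≤ 1) (hu : 0 ≤ u) :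
    Real.exp (a * u) ≤ 1 + a * u + a ^ 2 * Real.exp u := by
  have hexp : ∀ x : ℝ, Real.exp x = ∑' n : ℕ, x ^ n / n ! := by
    intro x
    rw [Real.exp_eq_exp_ℝ, NormedSpace.exp_eq_tsum_div]
  have hsum : ∀ x : ℝ, Summable (fun n : ℕ => x ^ n / n !) :=
    fun x => Real.summable_pow_div_factorial x
  have hsum2 : ∀ x : ℝ, Summable (fun n : ℕ => x ^ (n + 2) / (n + 2)!) := by
    intro x
    exact ((summable_nat_add_iff 2).2 (hsum x))
  have hsplit : ∀ x : ℝ, Real.exp x = 1 + x + ∑' n : ℕ, x ^ (n + 2) / (n + 2)! := by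
    intro x
    rw [hexp x, Summable.tsum_eq_zero_add (hsum x), Summable.tsum_eq_zero_add ((summable_nat_add_iff 1).2 (hsum x))]
    simp [Nat.factorial]
    ring
  rw [hsplit (a * u)]
  have hterm : ∀ n : ℕ, (a * u) ^ (n + 2) / (n + 2)! ≤ a ^ 2 * (u ^ (n + 2) / (n + 2)!) := by
    intro n
    rw [mul_pow, mul_div_assoc]
    apply mul_le_mul_of_nonneg_right _ (by positivity)
    exact pow_le_pow_of_le_one ha0 ha1 (by omega)
  have htsum : (∑' n : ℕ, (a * u) ^ (n + 2) / (n + 2)!) ≤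
      ∑' n : ℕ, a ^ 2 * (u ^ (n + 2) / (n + 2)!) := by
    exact Summable.tsum_le_tsum hterm (hsum2 _) ((hsum2 u).mul_left _)
  have h2 : (∑' n : ℕ, a ^ 2 * (u ^ (n + 2) / (n + 2)!)) = a ^ 2 * ∑' n : ℕ, u ^ (n + 2) / (n + 2)! :=
    tsum_mul_left
  have h3 : (∑' n : ℕ, u ^ (n + 2) / (n + 2)!) ≤ Real.exp u := by
    have := hsplit u
    nlinarith [Real.exp_pos u, mul_nonneg ha0 hu]
  have h4 : a ^ 2 * (∑' n : ℕ, u ^ (n + 2) / (n + 2)!) ≤ a ^ 2 * Real.exp u :=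
    mul_le_mul_of_nonneg_left h3 (by positivity)
  rw [h2] at htsum
  linarith

/-- `exp t - 1 - t ≤ exp |t| - 1 - |t|`. -/
lemma exp_sub_le_exp_abs_sub (t : ℝ) :
    Real.exp t - 1 - t ≤ Real.exp |t| - 1 - |t| := by
  rcases le_or_gt 0 t with ht | ht
  · rw [abs_of_nonneg ht]
  · rw [abs_of_neg ht]
    have hs : Real.sinh t ≤ t := by
      have h1 : -t < Real.sinh (-t) := Real.self_lt_sinh_iff.2 (by linarith)
      rw [Real.sinh_neg] at h1
      linarith
    rw [Real.sinh_eq] at hs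
    linarith

/-- Streamlined 4)⟹5): if `E X = 0`, `K > 0` and `E[exp(|X|/K)] ≤ 2`, then for every
real `h` with `K |h| < 1`, `E[exp(hX)] ≤ 1 + 2K²h²/(1 − K|h|) ≤ exp(2K²h²/(1 − K|h|))`. -/
theorem mgf_le_bernstein_of_psi1_norm_le {Ω : Type*} [MeasureSpace Ω]
    [IsProbabilityMeasure (ℙ : Measure Ω)] (X : Ω → ℝ)
    (hXint : Integrable X) (hmean : ∫ ω, X ω = 0)
    (K : ℝ) (hK : 0 < K)
    (hint : Integrable (fun ω => Real.exp (|X ω| / K)))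
    (horlicz : ∫ ω, Real.exp (|X ω| / K) ≤ 2)
    (h : ℝ) (hh : |h| * K < 1) :
    (∫ ω, Real.exp (h * X ω)) ≤ 1 + 2 * K ^ 2 * h ^ 2 / (1 - K * |h|) ∧
      1 + 2 * K ^ 2 * h ^ 2 / (1 - K * |h|) ≤
        Real.exp (2 * K ^ 2 * h ^ 2 / (1 - K * |h|)) := by
  set a : ℝ := K * |h| with ha_def
  have ha0 : 0 ≤ a := by positivity
  have ha1 : a < 1 := by rw [ha_def, mul_comm]; exact hh
  have hden : 0 < 1 - a := by linarith
  have ha2 : a ^ 2 = K ^ 2 * h ^ 2 := by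
    rw [ha_def, mul_pow, sq_abs]
  -- pointwise bound
  have hpoint : ∀ ω, Real.exp (h * X ω) ≤
      1 + h * X ω + K ^ 2 * h ^ 2 * Real.exp (|X ω| / K) := by
    intro ω
    have hu : 0 ≤ |X ω| / K := by positivity
    have habs : |h * X ω| = a * (|X ω| / K) := by
      rw [abs_mul, ha_def]
      field_simp
    have h1 := exp_sub_le_exp_abs_sub (h * X ω)
    have h2 : Real.exp |h * X ω| ≤ 1 + |h * X ω| + a ^ 2 * Real.exp (|X ω| / K) := by
      rw [habs]
      exact exp_mul_sub_le_aux ha0 ha1.le hu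
    rw [← ha2]
    linarith
  -- integrability of exp (h * X)
  have hintexp : Integrable (fun ω => Real.exp (h * X ω)) := by
    have hmeas : AEStronglyMeasurable (fun ω => Real.exp (h * X ω)) ℙ :=
      (Real.measurable_exp.comp_aemeasurable
        (hXint.aemeasurable.const_mul h)).aestronglyMeasurable
    refine hint.mono hmeas ?_
    filter_upwards with ω
    rw [Real.norm_eq_abs, Real.norm_eq_abs, abs_of_pos (Real.exp_pos _),
      abs_of_pos (Real.exp_pos _)]
    apply Real.exp_le_exp.2
    have habs : |h * X ω| = a * (|X ω| / K) := by
      rw [abs_mul, ha_def]; field_simp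
    calc h * X ω ≤ |h * X ω| := le_abs_self _
      _ = a * (|X ω| / K) := habs
      _ ≤ 1 * (|X ω| / K) := by
          apply mul_le_mul_of_nonneg_right ha1.le (by positivity)
      _ = |X ω| / K := one_mul _
  -- RHS integrable
  have i1 : Integrable (fun ω => 1 + h * X ω) :=
    (integrable_const 1).add (hXint.const_mul h)
  have hrhs : Integrable (fun ω => 1 + h * X ω + K ^ 2 * h ^ 2 * Real.exp (|X ω| / K)) :=
    i1.add (hint.const_mul _)
  have hIle : (∫ ω, Real.exp (h * X ω)) ≤
      ∫ ω, (1 + h * X ω + K ^ 2 * h ^ 2 * Real.exp (|X ω| / K)) :=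
    integral_mono hintexp hrhs hpoint
  have hIval : (∫ ω, (1 + h * X ω + K ^ 2 * h ^ 2 * Real.exp (|X ω| / K))) =
      1 + K ^ 2 * h ^ 2 * ∫ ω, Real.exp (|X ω| / K) := by
    rw [integral_add i1 (hint.const_mul _),
      integral_add (integrable_const 1) (hXint.const_mul h),
      integral_const, integral_const_mul, integral_const_mul, hmean]
    simp
  have hfirst : (∫ ω, Real.exp (h * X ω)) ≤ 1 + 2 * (K ^ 2 * h ^ 2) := by
    rw [hIval] at hIle
    nlinarith [hIle, horlicz, sq_nonneg (K * h)]
  constructor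
  · refine hfirst.trans ?_
    have hc : 0 ≤ K ^ 2 * h ^ 2 := by positivity
    rw [div_eq_mul_inv]
    have h1le : (1 : ℝ) ≤ (1 - K * |h|)⁻¹ := by
      rw [le_inv_comm₀ one_pos hden]
      · linarith
    nlinarith [mul_le_mul_of_nonneg_left h1le (by positivity : (0:ℝ) ≤ 2 * K ^ 2 * h ^ 2)]
  · have := Real.add_one_le_exp (2 * K ^ 2 * h ^ 2 / (1 - K * |h|))
    linarith
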